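/- (Recursive structure of the photon-number-preserving operator space.) Fix integers m ≥ 1 and k ≥ 1. The k-photon operator space decomposes as a direct sum End(P_k) = ker(L_k) ⊕ range(R_k); that is, the kernel of the restricted lowering map and the range of the restricted raising map are complementary linear subspaces of End(P_k) (their intersection is {0} and their sum is all of End(P_k)). -/

import Mathlib

open MvPolynomial

noncomputable section

/-- The `k`-photon sector `P_k`: homogeneous polynomials of degree `k` in `m` variables
(the Bargmann realization of the `m`-mode bosonic Fock space). -/
abbrev P (m k : ℕ) : Submodule ℂ (MvPolynomial (Fin m) ℂ) :=
  homogeneousSubmodule (Fin m) ℂ k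

lemma mulX_mem {m d : ℕ} (s : Fin m) {p : MvPolynomial (Fin m) ℂ} (hp : p ∈ P m d) :
    MvPolynomial.X s * p ∈ P m (d + 1) := by
  rw [mem_homogeneousSubmodule] at hp ⊢
  have := (isHomogeneous_X ℂ s).mul hp
  rwa [Nat.add_comm] at this

lemma degree_single_one {m : ℕ} (s : Fin m) : (Finsupp.single s 1).degree = 1 := by
  rw [Finsupp.degree_apply, Finsupp.support_single_ne_zero _ one_ne_zero, Finset.sum_singleton,
    Finsupp.single_eq_same]

lemma pderiv_mem {m d : ℕ} (s : Fin m) {p : MvPolynomial (Fin m) ℂ}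
    (hp : p ∈ P m (d + 1)) : MvPolynomial.pderiv s p ∈ P m d := by
  rw [mem_homogeneousSubmodule] at hp
  rw [as_sum p, map_sum]
  apply Submodule.sum_mem
  intro u hu
  rw [pderiv_monomial]
  by_cases h : u s = 0
  · simp [h]
  · rw [mem_homogeneousSubmodule]
    apply isHomogeneous_monomial
    have hle : Finsupp.single s 1 ≤ u :=
      Finsupp.single_le_iff.mpr (Nat.one_le_iff_ne_zero.mpr h)
    have hsum : (u - Finsupp.single s 1) + Finsupp.single s 1 = u :=
      tsub_add_cancel_of_le hle
    have hdeg : u.degree = d + 1 := by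
      have hc : coeff u p ≠ 0 := (mem_support_iff).mp hu
      have := hp hc
      rwa [Finsupp.degree_eq_weight_one]
    have hadd : (u - Finsupp.single s 1).degree + (Finsupp.single s 1).degree = u.degree := by
      simp_rw [Finsupp.degree_eq_weight_one]
      rw [← map_add, hsum]
    rw [degree_single_one] at hadd
    omega

/-- Multiplication by `x_s` as a linear map `P_d → P_{d+1}`. -/
def xRes (m d : ℕ) (s : Fin m) : P m d →ₗ[ℂ] P m (d + 1) :=
  (LinearMap.mulLeft ℂ (MvPolynomial.X s)).restrict fun _q hq => mulX_mem s hq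

/-- The partial derivative `∂_s` as a linear map `P_{d+1} → P_d`. -/
def dRes (m d : ℕ) (s : Fin m) : P m (d + 1) →ₗ[ℂ] P m d :=
  (MvPolynomial.pderiv s).toLinearMap.restrict fun _q hq => pderiv_mem s hq

/-- The restricted lowering map `L_{d+1} : End(P_{d+1}) → End(P_d)`,
`T ↦ Σ_s ∂_s ∘ T ∘ x_s`. -/
def Lres (m d : ℕ) :
    Module.End ℂ (P m (d + 1)) →ₗ[ℂ] Module.End ℂ (P m d) where
  toFun T := ∑ s, dRes m d s ∘ₗ T ∘ₗ xRes m d s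
  map_add' T T' := by
    rw [← Finset.sum_add_distrib]
    exact Finset.sum_congr rfl fun s _ => by
      rw [LinearMap.add_comp, LinearMap.comp_add]
  map_smul' c T := by
    simp [Finset.smul_sum, LinearMap.smul_comp, LinearMap.comp_smul]

/-- The restricted raising map `R_{d+1} : End(P_d) → End(P_{d+1})`,
`T ↦ Σ_s x_s ∘ T ∘ ∂_s`. -/
def Rres (m d : ℕ) :
    Module.End ℂ (P m d) →ₗ[ℂ] Module.End ℂ (P m (d + 1)) where
  toFun T := ∑ s, xRes m d s ∘ₗ T ∘ₗ dRes m d s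
  map_add' T T' := by
    rw [← Finset.sum_add_distrib]
    exact Finset.sum_congr rfl fun s _ => by
      rw [LinearMap.add_comp, LinearMap.comp_add]
  map_smul' c T := by
    simp [Finset.smul_sum, LinearMap.smul_comp, LinearMap.comp_smul]

end

noncomputable section Aux

open MvPolynomial

variable {m : ℕ}

@[simp] lemma xRes_coe (d : ℕ) (s : Fin m) (p : P m d) :
    (xRes m d s p : MvPolynomial (Fin m) ℂ) = MvPolynomial.X s * (p : MvPolynomial (Fin m) ℂ) := rfl

@[simp] lemma dRes_coe (d : ℕ) (s : Fin m) (p : P m (d + 1)) :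
    (dRes m d s p : MvPolynomial (Fin m) ℂ)
      = MvPolynomial.pderiv s (p : MvPolynomial (Fin m) ℂ) := rfl

lemma comm_lemma (d : ℕ) (s t : Fin m) :
    dRes m (d + 1) s ∘ₗ xRes m (d + 1) t
      = xRes m d t ∘ₗ dRes m d s + (if s = t then 1 else 0) := by
  apply LinearMap.ext; intro p; apply Subtype.ext
  by_cases h : s = t <;>
    simp [h, pderiv_mul, pderiv_X, add_comm]

lemma pderiv_of_mem_zero {s : Fin m} {p : MvPolynomial (Fin m) ℂ} (hp : p ∈ P m 0) :
    MvPolynomial.pderiv s p = 0 := by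
  rw [mem_homogeneousSubmodule] at hp
  rw [as_sum p, map_sum]
  apply Finset.sum_eq_zero
  intro u hu
  have hc : coeff u p ≠ 0 := mem_support_iff.mp hu
  have h0 := hp hc
  have hu0 : u = 0 := by
    have : u.degree = 0 := by rwa [Finsupp.degree_eq_weight_one]
    exact (Finsupp.degree_eq_zero_iff u).mp this
  simp [hu0]

lemma comm0_lemma (s t : Fin m) :
    dRes m 0 s ∘ₗ xRes m 0 t = (if s = t then (1 : Module.End ℂ (P m 0)) else 0) := by
  apply LinearMap.ext; intro p; apply Subtype.ext
  have h0 : MvPolynomial.pderiv s (p : MvPolynomial (Fin m) ℂ) = 0 := pderiv_of_mem_zero p.2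
  by_cases h : s = t
  · subst h; simp [pderiv_mul, pderiv_X, h0]
  · simp [h, pderiv_mul, pderiv_X, h0]

end Aux

noncomputable section Aux2

open MvPolynomial

variable {m : ℕ}

lemma euler_poly {n : ℕ} {p : MvPolynomial (Fin m) ℂ} (hp : p.IsHomogeneous n) :
    ∑ s : Fin m, MvPolynomial.X s * MvPolynomial.pderiv s p = (n : ℂ) • p := by
  have key : ∀ u : (Fin m) →₀ ℕ, ∀ c : ℂ,
      ∑ s : Fin m, X s * pderiv s (monomial u c) = ((u.degree : ℕ) : ℂ) • monomial u c := by
    intro u c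
    have step : ∀ s : Fin m, X s * pderiv s (monomial u c) = ((u s : ℕ) : ℂ) • monomial u c := by
      intro s
      rw [pderiv_monomial]
      by_cases h : u s = 0
      · simp [h]
      · have hle : Finsupp.single s 1 ≤ u :=
          Finsupp.single_le_iff.mpr (Nat.one_le_iff_ne_zero.mpr h)
        rw [X, monomial_mul, one_mul, add_tsub_cancel_of_le hle, smul_monomial]
        rw [mul_comm, smul_eq_mul]
    rw [Finset.sum_congr rfl fun s _ => step s, ← Finset.sum_smul]
    congr 1
    rw [← Nat.cast_sum]
    congr 1
    exact (Finset.sum_subset (Finset.subset_univ _)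
      (fun x _ hx => Finsupp.notMem_support_iff.mp hx)).symm
  calc ∑ s : Fin m, X s * pderiv s p
      = ∑ s : Fin m, ∑ u ∈ p.support, X s * pderiv s (monomial u (coeff u p)) := by
        refine Finset.sum_congr rfl fun s _ => ?_
        conv_lhs => rw [as_sum p]
        rw [map_sum, Finset.mul_sum]
    _ = ∑ u ∈ p.support, ∑ s : Fin m, X s * pderiv s (monomial u (coeff u p)) :=
        Finset.sum_comm
    _ = ∑ u ∈ p.support, (n : ℂ) • monomial u (coeff u p) := by
        refine Finset.sum_congr rfl fun u hu => ?_
        rw [key]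
        congr 2
        have hc : coeff u p ≠ 0 := mem_support_iff.mp hu
        have := hp hc
        rwa [Finsupp.degree_eq_weight_one]
    _ = (n : ℂ) • p := by rw [← Finset.smul_sum, ← as_sum]

lemma euler_op (m d : ℕ) :
    ∑ s : Fin m, xRes m d s ∘ₗ dRes m d s
      = (((d : ℕ) + 1 : ℂ) • 1 : Module.End ℂ (P m (d + 1))) := by
  apply LinearMap.ext; intro p; apply Subtype.ext
  have hp : (p : MvPolynomial (Fin m) ℂ).IsHomogeneous (d + 1) := p.2
  have := euler_poly hp
  push_cast at this ⊢
  simpa using this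

lemma comp_sumL {ι M N K : Type*} [AddCommGroup M] [Module ℂ M] [AddCommGroup N] [Module ℂ N]
    [AddCommGroup K] [Module ℂ K] (s : Finset ι) (f : N →ₗ[ℂ] K) (g : ι → M →ₗ[ℂ] N) :
    f ∘ₗ (∑ i ∈ s, g i) = ∑ i ∈ s, f ∘ₗ g i := by
  apply LinearMap.ext; intro x; simp

lemma sum_compL {ι M N K : Type*} [AddCommGroup M] [Module ℂ M] [AddCommGroup N] [Module ℂ N]
    [AddCommGroup K] [Module ℂ K] (s : Finset ι) (f : M →ₗ[ℂ] N) (g : ι → N →ₗ[ℂ] K) :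
    (∑ i ∈ s, g i) ∘ₗ f = ∑ i ∈ s, g i ∘ₗ f := by
  apply LinearMap.ext; intro x; simp

end Aux2

noncomputable section Aux3

open MvPolynomial

lemma recursion0 (m : ℕ) :
    Lres m 0 ∘ₗ Rres m 0 = ((m : ℂ) • 1 : Module.End ℂ (Module.End ℂ (P m 0))) := by
  apply LinearMap.ext; intro T
  simp only [LinearMap.comp_apply, LinearMap.smul_apply, Module.End.one_apply]
  show Lres m 0 (Rres m 0 T) = (m : ℂ) • T
  simp only [Lres, Rres, LinearMap.coe_mk, AddHom.coe_mk]
  have expand : ∀ s : Fin m,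
      dRes m 0 s ∘ₗ (∑ t, xRes m 0 t ∘ₗ T ∘ₗ dRes m 0 t) ∘ₗ xRes m 0 s
        = ∑ t, (dRes m 0 s ∘ₗ xRes m 0 t) ∘ₗ T ∘ₗ (dRes m 0 t ∘ₗ xRes m 0 s) := by
    intro s
    rw [sum_compL, comp_sumL]
    exact Finset.sum_congr rfl fun t _ => by
      simp only [LinearMap.comp_assoc]
  rw [Finset.sum_congr rfl fun s _ => expand s]
  have term : ∀ s t : Fin m,
      (dRes m 0 s ∘ₗ xRes m 0 t) ∘ₗ T ∘ₗ (dRes m 0 t ∘ₗ xRes m 0 s)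
        = if s = t then T else 0 := by
    intro s t
    rw [comm0_lemma, comm0_lemma]
    by_cases h : s = t
    · subst h
      simp [Module.End.one_eq_id]
    · have h' : ¬ t = s := fun hh => h hh.symm
      simp [h, h']
  rw [Finset.sum_congr rfl fun s _ =>
    Finset.sum_congr rfl fun t _ => term s t]
  have inner : ∀ s : Fin m, ∑ t : Fin m, (if s = t then T else 0) = T := fun s => by simp
  rw [Finset.sum_congr rfl fun s _ => inner s, Finset.sum_const, Finset.card_univ,
    Fintype.card_fin, Nat.cast_smul_eq_nsmul]

lemma recursion (m d : ℕ) :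
    Lres m (d + 1) ∘ₗ Rres m (d + 1)
      = Rres m d ∘ₗ Lres m d
          + (((2 * d + 2 + m : ℕ) : ℂ) • 1 : Module.End ℂ (Module.End ℂ (P m (d + 1)))) := by
  apply LinearMap.ext; intro T
  simp only [LinearMap.comp_apply, LinearMap.add_apply, LinearMap.smul_apply, Module.End.one_apply]
  show Lres m (d + 1) (Rres m (d + 1) T)
      = Rres m d (Lres m d T) + ((2 * d + 2 + m : ℕ) : ℂ) • T
  have expand : ∀ s : Fin m,
      dRes m (d + 1) s ∘ₗ (Rres m (d + 1) T) ∘ₗ xRes m (d + 1) s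
        = ∑ t, (dRes m (d + 1) s ∘ₗ xRes m (d + 1) t) ∘ₗ T
            ∘ₗ (dRes m (d + 1) t ∘ₗ xRes m (d + 1) s) := by
    intro s
    show dRes m (d + 1) s ∘ₗ (∑ t, xRes m (d + 1) t ∘ₗ T ∘ₗ dRes m (d + 1) t)
        ∘ₗ xRes m (d + 1) s = _
    rw [sum_compL, comp_sumL]
    exact Finset.sum_congr rfl fun t _ => by
      simp only [LinearMap.comp_assoc]
  have unfold : Lres m (d + 1) (Rres m (d + 1) T)
      = ∑ s, dRes m (d + 1) s ∘ₗ (Rres m (d + 1) T) ∘ₗ xRes m (d + 1) s := rfl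
  rw [unfold, Finset.sum_congr rfl fun s _ => expand s]
  have term : ∀ s t : Fin m,
      (dRes m (d + 1) s ∘ₗ xRes m (d + 1) t) ∘ₗ T ∘ₗ (dRes m (d + 1) t ∘ₗ xRes m (d + 1) s)
        = (xRes m d t ∘ₗ dRes m d s) ∘ₗ T ∘ₗ (xRes m d s ∘ₗ dRes m d t)
          + ((if t = s then (xRes m d t ∘ₗ dRes m d s) ∘ₗ T else 0)
          + ((if s = t then T ∘ₗ (xRes m d s ∘ₗ dRes m d t) else 0)
          + (if s = t then T else 0))) := by
    intro s t
    rw [comm_lemma d s t, comm_lemma d t s]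
    by_cases h : s = t
    · subst h
      simp only [if_pos rfl, if_true, LinearMap.add_comp, LinearMap.comp_add,
        Module.End.one_eq_id, LinearMap.comp_id, LinearMap.id_comp, LinearMap.comp_assoc]
      abel
    · have h' : ¬ t = s := fun hh => h hh.symm
      simp only [h, h', if_neg, if_false]
      simp [LinearMap.comp_assoc]
  rw [Finset.sum_congr rfl fun s _ =>
    Finset.sum_congr rfl fun t _ => term s t]
  have inner : ∀ s : Fin m,
      ∑ t : Fin m, ((xRes m d t ∘ₗ dRes m d s) ∘ₗ T ∘ₗ (xRes m d s ∘ₗ dRes m d t)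
        + ((if t = s then (xRes m d t ∘ₗ dRes m d s) ∘ₗ T else 0)
        + ((if s = t then T ∘ₗ (xRes m d s ∘ₗ dRes m d t) else 0)
        + (if s = t then T else 0))))
      = (∑ t : Fin m, (xRes m d t ∘ₗ dRes m d s) ∘ₗ T ∘ₗ (xRes m d s ∘ₗ dRes m d t))
        + ((xRes m d s ∘ₗ dRes m d s) ∘ₗ T + (T ∘ₗ (xRes m d s ∘ₗ dRes m d s) + T)) := by
    intro s
    rw [Finset.sum_add_distrib, Finset.sum_add_distrib, Finset.sum_add_distrib]
    congr 1
    congr 1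
    · simp
    congr 1
    · simp
    · simp
  rw [Finset.sum_congr rfl fun s _ => inner s, Finset.sum_add_distrib, Finset.sum_add_distrib,
    Finset.sum_add_distrib]
  have h1 : ∑ s : Fin m, ∑ t : Fin m,
      (xRes m d t ∘ₗ dRes m d s) ∘ₗ T ∘ₗ (xRes m d s ∘ₗ dRes m d t)
      = Rres m d (Lres m d T) := by
    rw [Finset.sum_comm]
    show _ = ∑ t, xRes m d t ∘ₗ (Lres m d T) ∘ₗ dRes m d t
    refine Finset.sum_congr rfl fun t _ => ?_
    show _ = xRes m d t ∘ₗ (∑ s, dRes m d s ∘ₗ T ∘ₗ xRes m d s) ∘ₗ dRes m d t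
    rw [sum_compL, comp_sumL]
    exact Finset.sum_congr rfl fun s _ => by
      simp only [LinearMap.comp_assoc]
  have h2 : ∑ s : Fin m, (xRes m d s ∘ₗ dRes m d s) ∘ₗ T = ((d : ℂ) + 1) • T := by
    rw [← sum_compL, euler_op]
    simp only [LinearMap.smul_comp, Module.End.one_eq_id, LinearMap.id_comp]
  have h3 : ∑ s : Fin m, T ∘ₗ (xRes m d s ∘ₗ dRes m d s) = ((d : ℂ) + 1) • T := by
    rw [← comp_sumL, euler_op]
    simp only [LinearMap.comp_smul, Module.End.one_eq_id, LinearMap.comp_id]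
  have h4 : ∑ _s : Fin m, T = (m : ℂ) • T := by
    rw [Finset.sum_const, Finset.card_univ, Fintype.card_fin, Nat.cast_smul_eq_nsmul]
  rw [h1, h2, h3, h4]
  push_cast
  module

end Aux3

set_option synthInstance.maxHeartbeats 1000000
noncomputable section Aux4

lemma unit_aux {M N : Type*} [AddCommGroup M] [Module ℂ M] [AddCommGroup N] [Module ℂ N]
    (L : N →ₗ[ℂ] M) (R : M →ₗ[ℂ] N) (c : ℂ) (hc : c ≠ 0)
    (h : IsUnit (L ∘ₗ R + c • (1 : Module.End ℂ M))) :
    IsUnit (R ∘ₗ L + c • (1 : Module.End ℂ N)) := by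
  obtain ⟨B, hB1, hB2⟩ := isUnit_iff_exists.mp h
  have h1 : ∀ x, L (R (B x)) + c • B x = x := by
    intro x
    have := congrArg (fun f => f x) hB1
    simpa [Module.End.mul_eq_comp] using this
  have h2 : ∀ x, B (L (R x)) + c • B x = x := by
    intro x
    have := congrArg (fun f => f x) hB2
    simpa [Module.End.mul_eq_comp] using this
  refine isUnit_iff_exists.mpr ⟨c⁻¹ • (1 - R ∘ₗ B ∘ₗ L), ?_, ?_⟩
  · apply LinearMap.ext; intro x
    simp only [Module.End.mul_eq_comp, LinearMap.comp_apply, LinearMap.add_apply,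
      LinearMap.smul_apply, Module.End.one_apply, LinearMap.sub_apply, map_smul, map_sub]
    have hy : R (L (R (B (L x)))) = R (L x) - c • R (B (L x)) := by
      rw [eq_sub_of_add_eq (h1 (L x))]
      simp [map_sub, map_smul]
    rw [hy]
    match_scalars <;> field_simp <;> ring
  · apply LinearMap.ext; intro x
    simp only [Module.End.mul_eq_comp, LinearMap.comp_apply, LinearMap.add_apply,
      LinearMap.smul_apply, Module.End.one_apply, LinearMap.sub_apply, map_smul, map_sub,
      map_add]
    have hy : B (L (R (L x))) = L x - c • B (L x) := eq_sub_of_add_eq (h2 (L x))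
    rw [hy, map_sub, map_smul]
    match_scalars <;> field_simp <;> ring

lemma isUnit_A (m : ℕ) (hm : 1 ≤ m) (d : ℕ) :
    ∀ n : ℕ, IsUnit (Lres m d ∘ₗ Rres m d
      + ((n : ℂ) • 1 : Module.End ℂ (Module.End ℂ (P m d)))) := by
  induction d with
  | zero =>
    intro n
    rw [recursion0, ← add_smul, ← Nat.cast_add, ← Algebra.algebraMap_eq_smul_one]
    exact (isUnit_iff_ne_zero.mpr (Nat.cast_ne_zero.mpr (by omega))).map
      (algebraMap ℂ (Module.End ℂ (Module.End ℂ (P m 0))))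
  | succ d ih =>
    intro n
    rw [recursion, add_assoc, ← add_smul, ← Nat.cast_add]
    have hc : ((2 * d + 2 + m + n : ℕ) : ℂ) ≠ 0 := Nat.cast_ne_zero.mpr (by omega)
    have h2 := unit_aux (M := Module.End ℂ (P m d)) (N := Module.End ℂ (P m (d + 1)))
      (Lres m d) (Rres m d) ((2 * d + 2 + m + n : ℕ) : ℂ) hc (ih (2 * d + 2 + m + n))
    exact h2

end Aux4


/-- Recursive structure of the photon-number-preserving operator
space. For `m ≥ 1` and `k ≥ 1` (here `k = j + 1`), the `k`-photon operator space
decomposes as `End(P_k) = ker(L_k) ⊕ range(R_k)`: the kernel of the restricted lowering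
map and the range of the restricted raising map intersect trivially and span all of
`End(P_k)`. -/
theorem stmt17 (m j : ℕ) (hm : 1 ≤ m) :
    LinearMap.ker (Lres m j) ⊓ LinearMap.range (Rres m j) = ⊥ ∧
      LinearMap.ker (Lres m j) ⊔ LinearMap.range (Rres m j) = ⊤ := by
  have hA : IsUnit (Lres m j ∘ₗ Rres m j) := by
    have h := isUnit_A m hm j 0
    simpa using h
  obtain ⟨B, hB1, hB2⟩ := isUnit_iff_exists.mp hA
  have hB1' : ∀ S, Lres m j (Rres m j (B S)) = S := by
    intro S
    have := congrArg (fun f => f S) hB1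
    simpa [Module.End.mul_eq_comp] using this
  have hinj : Function.Injective (Lres m j ∘ₗ Rres m j) :=
    ((Module.End.isUnit_iff _).mp hA).1
  constructor
  · rw [eq_bot_iff]
    rintro T hT
    obtain ⟨hk, hr⟩ := Submodule.mem_inf.mp hT
    obtain ⟨S, rfl⟩ := hr
    have h0 : (Lres m j ∘ₗ Rres m j) S = 0 := LinearMap.mem_ker.mp hk
    have hS : S = 0 := by
      apply hinj
      simpa using h0
    simp [hS]
  · rw [eq_top_iff]
    intro T _
    rw [Submodule.mem_sup]
    refine ⟨T - Rres m j (B (Lres m j T)), ?_, Rres m j (B (Lres m j T)),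
      ⟨B (Lres m j T), rfl⟩, by abel⟩
    rw [LinearMap.mem_ker]
    have hms := map_sub (Lres m j) T (Rres m j (B (Lres m j T)))
    rw [hms, hB1', sub_self]
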